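/- Let g ∈ C²[a,b] satisfy g(a) = g(b) = 0, and let λ₀ ≤ λ₁ be real. Then for all t ∈ [a,b], |g(t)| ≤ M · max_{θ ∈ [a,b]} |g''(θ) - (λ₀+λ₁)g'(θ) + λ₀λ₁ g(θ)|, where M = max_{t ∈ [a,b]} Ω(t) and Ω is the unique function with Ω(a) = Ω(b) = 0, Ω'' - (λ₀+λ₁)Ω' + λ₀λ₁Ω = -1. Moreover this constant M is the best possible. -/

import Mathlib

open Real Set

-- Maximum principle: if L h ≤ 0 on [a,b] and h vanishes at endpoints, then h ≥ 0.
lemma max_principle_aux {a b l0 l1 : ℝ} (hab : a < b) {h : ℝ → ℝ}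
    (hh : ContDiffOn ℝ 2 h (Set.Icc a b)) (ha0 : h a = 0) (hb0 : h b = 0)
    (hode : ∀ t ∈ Set.Icc a b,
      iteratedDerivWithin 2 h (Set.Icc a b) t
        - (l0 + l1) * derivWithin h (Set.Icc a b) t + l0 * l1 * h t ≤ 0) :
    ∀ t ∈ Set.Icc a b, 0 ≤ h t := by
  set s := Set.Icc a b with hs
  have hu : UniqueDiffOn ℝ s := uniqueDiffOn_Icc hab
  set D : ℝ → ℝ := derivWithin h s with hD
  have hDcd : ContDiffOn ℝ 1 D s := hh.derivWithin hu (by norm_num)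
  have hhdiff : DifferentiableOn ℝ h s := hh.differentiableOn (by norm_num)
  have hDdiff : DifferentiableOn ℝ D s := hDcd.differentiableOn (by norm_num)
  have hD2 : ∀ t ∈ s, iteratedDerivWithin 2 h s t = derivWithin D s t := by
    intro t ht
    rw [show (2 : ℕ) = 1 + 1 from rfl, iteratedDerivWithin_succ]
    exact derivWithin_congr (fun y hy => congrFun iteratedDerivWithin_one y)
      (congrFun iteratedDerivWithin_one t)
  set u : ℝ → ℝ := fun t => Real.exp (-l1 * t) * (D t - l0 * h t) with hu_def
  set w : ℝ → ℝ := fun t => Real.exp (-l0 * t) * h t with hw_def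
  set W' : ℝ → ℝ := fun t => Real.exp (-l0 * t) * (D t - l0 * h t) with hW'_def
  -- derivative facts at interior points
  have hinterior : interior s = Set.Ioo a b := interior_Icc
  have hder : ∀ x ∈ Set.Ioo a b,
      HasDerivAt h (D x) x ∧ HasDerivAt D (derivWithin D s x) x := by
    intro x hx
    have hxs : x ∈ s := Ioo_subset_Icc_self hx
    have hmem : s ∈ nhds x := Icc_mem_nhds hx.1 hx.2
    exact ⟨((hhdiff x hxs).hasDerivWithinAt).hasDerivAt hmem,
      ((hDdiff x hxs).hasDerivWithinAt).hasDerivAt hmem⟩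
  have huder : ∀ x ∈ Set.Ioo a b,
      HasDerivAt u (Real.exp (-l1 * x) *
        (derivWithin D s x - (l0 + l1) * D x + l0 * l1 * h x)) x := by
    intro x hx
    obtain ⟨h1, h2⟩ := hder x hx
    have e1 : HasDerivAt (fun t => Real.exp (-l1 * t)) (Real.exp (-l1 * x) * (-l1 * 1)) x :=
      ((hasDerivAt_id x).const_mul (-l1)).exp
    have e2 : HasDerivAt (fun t => D t - l0 * h t) (derivWithin D s x - l0 * D x) x :=
      h2.sub (h1.const_mul l0)
    have : HasDerivAt (fun t => Real.exp (-l1 * t) * (D t - l0 * h t)) _ x := e1.mul e2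
    convert this using 1
    ring
  have hwder : ∀ x ∈ Set.Ioo a b, HasDerivAt w (W' x) x := by
    intro x hx
    obtain ⟨h1, _⟩ := hder x hx
    have e1 : HasDerivAt (fun t => Real.exp (-l0 * t)) (Real.exp (-l0 * x) * (-l0 * 1)) x :=
      ((hasDerivAt_id x).const_mul (-l0)).exp
    have : HasDerivAt (fun t => Real.exp (-l0 * t) * h t) _ x := e1.mul h1
    convert this using 1
    simp only [hW'_def]
    ring
  -- u is antitone on s
  have hucont : ContinuousOn u s := by
    apply ContinuousOn.mul
    · exact (Real.continuous_exp.comp (continuous_const.mul continuous_id)).continuousOn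
    · exact (hDcd.continuousOn).sub (continuousOn_const.mul hh.continuousOn)
  have huanti : AntitoneOn u s := by
    apply antitoneOn_of_deriv_nonpos (convex_Icc a b) hucont
    · rw [interior_Icc]
      intro x hx
      exact ((huder x hx).differentiableAt).differentiableWithinAt
    · rw [interior_Icc]
      intro x hx
      rw [(huder x hx).deriv]
      apply mul_nonpos_of_nonneg_of_nonpos (Real.exp_pos _).le
      have := hode x (Ioo_subset_Icc_self hx)
      rw [hD2 x (Ioo_subset_Icc_self hx)] at this
      linarith
  have hwcont : ContinuousOn w s := by
    apply ContinuousOn.mul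
    · exact (Real.continuous_exp.comp (continuous_const.mul continuous_id)).continuousOn
    · exact hh.continuousOn
  -- main argument
  intro t ht
  by_contra hneg
  push_neg at hneg
  have hta : a < t := lt_of_le_of_ne ht.1 (by rintro rfl; rw [ha0] at hneg; linarith)
  have htb : t < b := lt_of_le_of_ne ht.2 (by rintro rfl; rw [hb0] at hneg; linarith)
  have hwt : w t < 0 := mul_neg_of_pos_of_neg (Real.exp_pos _) hneg
  have hwa : w a = 0 := by simp [hw_def, ha0]
  have hwb : w b = 0 := by simp [hw_def, hb0]
  obtain ⟨c₁, hc₁, hc₁'⟩ := exists_hasDerivAt_eq_slope w W' hta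
    (hwcont.mono (Icc_subset_Icc le_rfl htb.le))
    (fun x hx => hwder x (Ioo_subset_Ioo le_rfl htb.le hx))
  obtain ⟨c₂, hc₂, hc₂'⟩ := exists_hasDerivAt_eq_slope w W' htb
    (hwcont.mono (Icc_subset_Icc hta.le le_rfl))
    (fun x hx => hwder x (Ioo_subset_Ioo hta.le le_rfl hx))
  have hW1 : W' c₁ < 0 := by
    rw [hc₁', hwa]
    apply div_neg_of_neg_of_pos <;> linarith
  have hW2 : 0 < W' c₂ := by
    rw [hc₂', hwb]
    apply div_pos <;> linarith
  have hz1 : D c₁ - l0 * h c₁ < 0 := by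
    by_contra hz
    push_neg at hz
    exact absurd (mul_nonneg (Real.exp_pos (-l0 * c₁)).le hz) (not_le.2 hW1)
  have hz2 : 0 < D c₂ - l0 * h c₂ := by
    by_contra hz
    push_neg at hz
    exact absurd hW2 (not_lt.2 (mul_nonpos_of_nonneg_of_nonpos (Real.exp_pos _).le hz))
  have hu1 : u c₁ < 0 := mul_neg_of_pos_of_neg (Real.exp_pos _) hz1
  have hu2 : 0 < u c₂ := mul_pos (Real.exp_pos _) hz2
  have hc₁s : c₁ ∈ s := Ioo_subset_Icc_self ⟨hc₁.1, hc₁.2.trans htb⟩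
  have hc₂s : c₂ ∈ s := Ioo_subset_Icc_self ⟨hta.trans hc₂.1, hc₂.2⟩
  have := huanti hc₁s hc₂s (le_of_lt (hc₁.2.trans hc₂.1))
  linarith

theorem stmt_8 (a b l0 l1 : ℝ) (hab : a < b) (hl : l0 ≤ l1)
    (Ω : ℝ → ℝ) (hΩ : ContDiffOn ℝ 2 Ω (Set.Icc a b))
    (hΩa : Ω a = 0) (hΩb : Ω b = 0)
    (hΩode : ∀ t ∈ Set.Icc a b,
      iteratedDerivWithin 2 Ω (Set.Icc a b) t
        - (l0 + l1) * derivWithin Ω (Set.Icc a b) t + l0 * l1 * Ω t = -1)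
    (M : ℝ) (hM : IsGreatest (Ω '' Set.Icc a b) M) :
    (∀ g : ℝ → ℝ, ContDiffOn ℝ 2 g (Set.Icc a b) → g a = 0 → g b = 0 →
      ∀ K : ℝ, (∀ θ ∈ Set.Icc a b,
          |iteratedDerivWithin 2 g (Set.Icc a b) θ
            - (l0 + l1) * derivWithin g (Set.Icc a b) θ + l0 * l1 * g θ| ≤ K) →
      ∀ t ∈ Set.Icc a b, |g t| ≤ M * K) ∧
    (∀ C : ℝ,
      (∀ g : ℝ → ℝ, ContDiffOn ℝ 2 g (Set.Icc a b) → g a = 0 → g b = 0 →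
        ∀ K : ℝ, (∀ θ ∈ Set.Icc a b,
            |iteratedDerivWithin 2 g (Set.Icc a b) θ
              - (l0 + l1) * derivWithin g (Set.Icc a b) θ + l0 * l1 * g θ| ≤ K) →
        ∀ t ∈ Set.Icc a b, |g t| ≤ C * K) → M ≤ C) := by
  set s := Set.Icc a b with hs
  have hu : UniqueDiffOn ℝ s := uniqueDiffOn_Icc hab
  have has : a ∈ s := Set.left_mem_Icc.2 hab.le
  constructor
  · -- main bound
    intro g hg hga hgb K hK t ht
    have hK0 : 0 ≤ K := le_trans (abs_nonneg _) (hK a has)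
    -- one-sided bound helper
    have main : ∀ g : ℝ → ℝ, ContDiffOn ℝ 2 g s → g a = 0 → g b = 0 →
        (∀ θ ∈ s, |iteratedDerivWithin 2 g s θ
            - (l0 + l1) * derivWithin g s θ + l0 * l1 * g θ| ≤ K) →
        ∀ t ∈ s, 0 ≤ K * Ω t + g t := by
      intro g hg hga hgb hKg
      apply max_principle_aux hab ((contDiffOn_const.mul hΩ).add hg)
        (by simp [hΩa, hga]) (by simp [hΩb, hgb])
      intro θ hθ
      have hd1 : derivWithin (fun t => K * Ω t + g t) s θ
          = K * derivWithin Ω s θ + derivWithin g s θ := by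
        rw [derivWithin_fun_add
          (((contDiffOn_const.mul hΩ).differentiableOn (by norm_num)) θ hθ)
          ((hg.differentiableOn (by norm_num)) θ hθ),
          derivWithin_const_mul K ((hΩ.differentiableOn (by norm_num)) θ hθ)]
      have hd2 : iteratedDerivWithin 2 (fun t => K * Ω t + g t) s θ
          = K * iteratedDerivWithin 2 Ω s θ + iteratedDerivWithin 2 g s θ := by
        rw [show (fun t => K * Ω t + g t) = (fun t => K * Ω t) + g from rfl,
          iteratedDerivWithin_add hθ hu ((contDiffOn_const.mul hΩ) θ hθ) (hg θ hθ),
          iteratedDerivWithin_const_mul hθ hu K (hΩ θ hθ)]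
      rw [hd1, hd2]
      have h1 := hΩode θ hθ
      have h2 := hKg θ hθ
      have h3 := abs_le.1 h2
      nlinarith [h3.1, h3.2]
    have h1 := main g hg hga hgb hK t ht
    have hgneg : ContDiffOn ℝ 2 (fun t => -(g t)) s := hg.neg
    have h2 := main (fun t => -(g t)) hgneg (by simp [hga]) (by simp [hgb]) ?_ t ht
    · have h2' : 0 ≤ K * Ω t + -(g t) := h2
      have hΩM : Ω t ≤ M := hM.2 ⟨t, ht, rfl⟩
      have : K * Ω t ≤ K * M := mul_le_mul_of_nonneg_left hΩM hK0
      rw [abs_le]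
      constructor <;> linarith
    · intro θ hθ
      have hd1 : derivWithin (fun t => -(g t)) s θ = -derivWithin g s θ :=
        derivWithin.fun_neg
      have hd2 : iteratedDerivWithin 2 (fun t => -(g t)) s θ
          = -iteratedDerivWithin 2 g s θ := iteratedDerivWithin_fun_neg g
      rw [hd1, hd2]
      have h2 := hK θ hθ
      rw [show -iteratedDerivWithin 2 g s θ - (l0 + l1) * -derivWithin g s θ
          + l0 * l1 * -(g θ)
        = -(iteratedDerivWithin 2 g s θ - (l0 + l1) * derivWithin g s θ + l0 * l1 * g θ)
        from by ring, abs_neg]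
      exact h2
  · -- sharpness
    intro C hC
    obtain ⟨t₀, ht₀, hMt₀⟩ := hM.1
    have := hC Ω hΩ hΩa hΩb 1 (fun θ hθ => by rw [hΩode θ hθ]; simp) t₀ ht₀
    rw [hMt₀] at this
    have h1 : M ≤ |M| := le_abs_self M
    linarith
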